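/- Let K₁, K₂ ⊆ ℝⁿ be closed sets such that K₁ is derivable on ∂K₁ ∩ ∂K₂, i.e. T_{K₁}(x) = T^a_{K₁}(x) for all x ∈ ∂K₁ ∩ ∂K₂. Let x₀ ∈ ∂K₁ ∩ ∂K₂ and assume the transversality condition (◇): there exist a neighborhood N(x₀) of x₀, c > 0 and α ∈ [0,1) such that for all x₁ ∈ (∂K₁ \ K₂) ∩ N(x₀) and x₂ ∈ (∂K₂ \ K₁) ∩ N(x₀) there exist v₁ ∈ T_{K₁}(x₁) and v₂ ∈ T_{K₂}(x₂) with |(v₁,v₂)| ≤ c·|x₁ − x₂| and x₂ − x₁ ∈ v₁ − v₂ + α·|x₁ − x₂|·𝔹. Then T^a_{K₁}(x₀) ∩ T^a_{K₂}(x₀) = T^a_{K₁ ∩ K₂}(x₀). -/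

import Mathlib

open MeasureTheory Filter Topology Set
open scoped RealInnerProductSpace

/-- Euclidean space ℝⁿ. -/
abbrev Euc (n : ℕ) := EuclideanSpace ℝ (Fin n)

variable {E : Type*} [NormedAddCommGroup E] [InnerProductSpace ℝ E]

/-- The contingent (Bouligand) cone to `S` at `x`:
`v` belongs to it iff there are sequences `tᵢ → 0⁺` and `vᵢ → v` with `x + tᵢ • vᵢ ∈ S`. -/
def contingentCone (S : Set E) (x : E) : Set E :=
  {v | ∃ t : ℕ → ℝ, ∃ w : ℕ → E,
    (∀ i, 0 < t i) ∧ Tendsto t atTop (𝓝 0) ∧ Tendsto w atTop (𝓝 v) ∧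
    ∀ i, x + t i • w i ∈ S}

/-- The adjacent cone to `S` at `x`:
`v` belongs to it iff for every sequence `tᵢ → 0⁺` there is `vᵢ → v` with `x + tᵢ • vᵢ ∈ S`. -/
def adjacentCone (S : Set E) (x : E) : Set E :=
  {v | ∀ t : ℕ → ℝ, (∀ i, 0 < t i) → Tendsto t atTop (𝓝 0) →
    ∃ w : ℕ → E, Tendsto w atTop (𝓝 v) ∧ ∀ i, x + t i • w i ∈ S}

/-- The Dubovitskiy cone to `S` at `x`. -/
def dubovitskiyCone (S : Set E) (x : E) : Set E :=
  {v | ∀ t : ℕ → ℝ, ∀ w : ℕ → E, (∀ i, 0 < t i) → Tendsto t atTop (𝓝 0) →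
    Tendsto w atTop (𝓝 v) → ∀ᶠ i in atTop, x + t i • w i ∈ interior S}

/-- Lower semicontinuity of a set-valued map at a point along a filter `l`. -/
def SVLowerSemicontinuousAt (F : E → Set E) (l : Filter E) (x : E) : Prop :=
  ∀ U : Set E, IsOpen U → (F x ∩ U).Nonempty → ∀ᶠ y in l, (F y ∩ U).Nonempty

/-- Upper semicontinuity of a set-valued map at a point along a filter `l`. -/
def SVUpperSemicontinuousAt (F : E → Set E) (l : Filter E) (x : E) : Prop :=
  ∀ U : Set E, IsOpen U → F x ⊆ U → ∀ᶠ y in l, F y ⊆ U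

/-- Continuity (lower and upper semicontinuity) of a set-valued map at `x` along `l`. -/
def SVContinuousAt (F : E → Set E) (l : Filter E) (x : E) : Prop :=
  SVLowerSemicontinuousAt F l x ∧ SVUpperSemicontinuousAt F l x

/-- Continuity of a set-valued map. -/
def SVContinuous (F : E → Set E) : Prop := ∀ x, SVContinuousAt F (𝓝 x) x

/-- Local boundedness of a set-valued map. -/
def SVLocallyBounded (F : E → Set E) : Prop :=
  ∀ x : E, ∃ N ∈ 𝓝 x, ∃ M : ℝ, ∀ y ∈ N, ∀ v ∈ F y, ‖v‖ ≤ M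

/-- One-sided local Lipschitz continuity of a set-valued map. -/
def OneSidedLocallyLipschitz (F : E → Set E) : Prop :=
  ∀ N : Set E, N.Nonempty → IsCompact N → ∃ k > 0, ∀ x₁ ∈ N, ∀ x₂ ∈ N,
    ∀ w₁ ∈ F x₁, ∃ w₂ ∈ F x₂, ⟪x₁ - x₂, w₁⟫ ≤ ⟪x₁ - x₂, w₂⟫ + k * ‖x₁ - x₂‖ ^ 2

/-- The standing assumption (SA): `C` closed; `F x` nonempty, closed, convex on `C`;
`F` continuous and one-sided locally Lipschitz. -/
structure StandingAssumption (F : E → Set E) (C : Set E) : Prop where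
  closed_C : IsClosed C
  nonempty_images : ∀ x ∈ C, (F x).Nonempty
  closed_images : ∀ x ∈ C, IsClosed (F x)
  convex_images : ∀ x ∈ C, Convex ℝ (F x)
  continuous : SVContinuous F
  osLipschitz : OneSidedLocallyLipschitz F

/-- Admissible solution domains: `[0,T]` with `T ≥ 0`, or `[0,T)` with `T ∈ (0,∞]`. -/
def IsSolDomain (D : Set ℝ) : Prop :=
  (∃ T : ℝ, 0 ≤ T ∧ D = Icc 0 T) ∨ (∃ T : ℝ, 0 < T ∧ D = Ico 0 T) ∨ D = Ici 0

/-- `φ` is a solution of the constrained differential inclusion `ẋ ∈ F(x)`, `x ∈ C`,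
on the domain `D`: it stays in `C` and is a locally absolutely continuous arc whose
derivative is an integrable selection of `F ∘ φ` almost everywhere. -/
def IsSolution (F : E → Set E) (C : Set E) (D : Set ℝ) (φ : ℝ → E) : Prop :=
  IsSolDomain D ∧ (∀ t ∈ D, φ t ∈ C) ∧
  ∃ g : ℝ → E,
    (∀ᵐ t ∂(volume.restrict D), g t ∈ F (φ t)) ∧
    ∀ t ∈ D, IntervalIntegrable g volume 0 t ∧ φ t = φ 0 + ∫ s in (0:ℝ)..t, g s

/-- Forward invariance of `K` for the constrained differential inclusion. -/
def ForwardInvariant (F : E → Set E) (C K : Set E) : Prop :=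
  ∀ D : Set ℝ, ∀ φ : ℝ → E, IsSolution F C D φ → φ 0 ∈ K → ∀ t ∈ D, φ t ∈ K

/-- The set 𝒫 of critical points: points of `∂K ∩ ∂C` every neighborhood of which
meets `C \ K`. -/
def critSet (K C : Set E) : Set E :=
  {x | x ∈ frontier K ∩ frontier C ∧ ∀ N ∈ 𝓝 x, (N ∩ (C \ K)).Nonempty}

/-- The set of initial speeds `F_φ(x)` of an arc `φ` at `x`. -/
def initialSpeeds (φ : ℝ → E) (x : E) : Set E :=
  {v | ∃ t : ℕ → ℝ, (∀ i, 0 < t i) ∧ Tendsto t atTop (𝓝 0) ∧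
    Tendsto (fun i => (t i)⁻¹ • (φ (t i) - x)) atTop (𝓝 v)}

/-- The metric projection of `y` onto `S`. -/
def projSet (S : Set E) (y : E) : Set E := {z ∈ S | dist y z = Metric.infDist y S}

/-- `φ` leaves `K` immediately: for some `T > 0`, `φ(t) ∈ C \ K` on `(0,T]`. -/
def LeavesImmediately (K C : Set E) (D : Set ℝ) (φ : ℝ → E) : Prop :=
  ∃ T > 0, Ioc 0 T ⊆ D ∧ ∀ t ∈ Ioc 0 T, φ t ∈ C \ K

/-- Property (★): for some `T > 0`, `Proj_{∂K}(φ(t)) ∩ int C ≠ ∅` on `(0,T]`. -/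
def PropStar (K C : Set E) (D : Set ℝ) (φ : ℝ → E) : Prop :=
  ∃ T > 0, Ioc 0 T ⊆ D ∧
    ∀ t ∈ Ioc 0 T, (projSet (frontier K) (φ t) ∩ interior C).Nonempty

/-- Euclidean norm of the concatenated vector `(v₁, v₂) ∈ ℝ²ⁿ`. -/
noncomputable def pairNorm (v₁ v₂ : E) : ℝ := Real.sqrt (‖v₁‖ ^ 2 + ‖v₂‖ ^ 2)

/-- Assumption 1: `F(x) ⊆ T_K(x)` on 𝒫. -/
def Assumption1 (F : E → Set E) (K C : Set E) : Prop :=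
  ∀ x ∈ critSet K C, F x ⊆ contingentCone K x

/-- Assumption 2: `F(x) ∩ T_{∂K ∩ ∂C}(x) = ∅` on 𝒫. -/
def Assumption2 (F : E → Set E) (K C : Set E) : Prop :=
  ∀ x ∈ critSet K C, F x ∩ contingentCone (frontier K ∩ frontier C) x = ∅

/-- Assumption 3 (transversality) at a point `x`. -/
def Assumption3At (K C : Set E) (x : E) : Prop :=
  contingentCone (frontier K) x = adjacentCone (frontier K) x ∧
  contingentCone C x = adjacentCone C x ∧
  ∃ N ∈ 𝓝 x, ∃ c > 0, ∃ α ∈ Ico (0:ℝ) 1,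
    ∀ x₁ ∈ (frontier K \ C) ∩ N, ∀ x₂ ∈ (frontier C \ frontier K) ∩ N,
      ∃ v₁ ∈ contingentCone (frontier K) x₁, ∃ v₂ ∈ contingentCone C x₂,
        pairNorm v₁ v₂ ≤ c * ‖x₁ - x₂‖ ∧ ‖(x₂ - x₁) - (v₁ - v₂)‖ ≤ α * ‖x₁ - x₂‖

/-- Assumption 3 (transversality) on 𝒫. -/
def Assumption3 (K C : Set E) : Prop := ∀ x ∈ critSet K C, Assumption3At K C x

/-- The transversality condition (◇) for a pair of sets at `x₀`. -/
def TransversalAt (K₁ K₂ : Set E) (x₀ : E) : Prop :=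
  ∃ N ∈ 𝓝 x₀, ∃ c > 0, ∃ α ∈ Ico (0:ℝ) 1,
    ∀ x₁ ∈ (frontier K₁ \ K₂) ∩ N, ∀ x₂ ∈ (frontier K₂ \ K₁) ∩ N,
      ∃ v₁ ∈ contingentCone K₁ x₁, ∃ v₂ ∈ contingentCone K₂ x₂,
        pairNorm v₁ v₂ ≤ c * ‖x₁ - x₂‖ ∧ ‖(x₂ - x₁) - (v₁ - v₂)‖ ≤ α * ‖x₁ - x₂‖

lemma inner_bound' (a v : E) (lam d : ℝ) (hda : ‖a‖ = d) (hd0 : 0 < d)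
    (s : ℕ → ℝ) (u : ℕ → E) (hs : ∀ j, 0 < s j)
    (hu : Tendsto u atTop (𝓝 v))
    (hineq : ∀ᶠ j in atTop, d ≤ ‖a + s j • u j‖ + lam * (s j * ‖u j‖))
    (hsu : Tendsto (fun j => s j * ‖u j‖) atTop (𝓝 0)) :
    -(lam * d * ‖v‖) ≤ ⟪a, v⟫ := by
  have hnu : Tendsto (fun j => ‖u j‖) atTop (𝓝 ‖v‖) := hu.norm
  have hev : ∀ᶠ j in atTop, lam * (s j * ‖u j‖) < d := by
    have h := hsu.const_mul lam
    rw [mul_zero] at h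
    exact h.eventually_lt_const hd0
  have hpt : ∀ᶠ j in atTop,
      -(lam * d * ‖u j‖) - s j * ‖u j‖ ^ 2 / 2 ≤ ⟪a, u j⟫ := by
    filter_upwards [hineq, hev] with j h1 h2
    have hs' := hs j
    have h3 : d - lam * (s j * ‖u j‖) ≤ ‖a + s j • u j‖ := by linarith
    have h4 : (d - lam * (s j * ‖u j‖)) ^ 2 ≤ ‖a + s j • u j‖ ^ 2 := by
      have h0 : 0 ≤ d - lam * (s j * ‖u j‖) := by linarith
      nlinarith [norm_nonneg (a + s j • u j)]
    rw [norm_add_sq_real, real_inner_smul_right, norm_smul, Real.norm_eq_abs,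
      abs_of_pos hs', hda] at h4
    nlinarith [norm_nonneg (u j), sq_nonneg lam, sq_nonneg (s j * ‖u j‖)]
  have hlim : Tendsto (fun j => -(lam * d * ‖u j‖) - s j * ‖u j‖ ^ 2 / 2) atTop
      (𝓝 (-(lam * d * ‖v‖))) := by
    have h1 : Tendsto (fun j => lam * d * ‖u j‖) atTop (𝓝 (lam * d * ‖v‖)) :=
      hnu.const_mul _
    have h2 : Tendsto (fun j => s j * ‖u j‖ ^ 2 / 2) atTop (𝓝 0) := by
      have h3 : Tendsto (fun j => (s j * ‖u j‖) * ‖u j‖ / 2) atTop (𝓝 (0 * ‖v‖ / 2)) :=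
        (hsu.mul hnu).div_const 2
      simpa [mul_assoc, pow_two] using h3
    simpa using h1.neg.sub h2
  have hinner : Tendsto (fun j => ⟪a, u j⟫) atTop (𝓝 ⟪a, v⟫) :=
    (tendsto_const_nhds (x := a)).inner hu
  exact le_of_tendsto_of_tendsto hlim hinner hpt

set_option maxHeartbeats 2000000 in
lemma key_lemma [FiniteDimensional ℝ E] {K₁ K₂ : Set E}
    (hK₁ : IsClosed K₁) (hK₂ : IsClosed K₂)
    {x₀ : E} (htrans : TransversalAt K₁ K₂ x₀) :
    ∃ lam > (0:ℝ), ∃ ρ > (0:ℝ), ∀ p ∈ K₁, ∀ q ∈ K₂, ‖p - x₀‖ < ρ → ‖q - x₀‖ < ρ →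
      ‖p - q‖ ≤ lam * ρ → ∃ r ∈ K₁ ∩ K₂, ‖r - p‖ ≤ ‖p - q‖ / lam := by
  obtain ⟨N, hN, c, hc, α, hα, H⟩ := htrans
  obtain ⟨ρ₀, hρ₀, hball⟩ := Metric.nhds_basis_closedBall.mem_iff.mp hN
  have hα0 : 0 ≤ α := hα.1
  have hα1 : α < 1 := hα.2
  set lam := min (1/2 : ℝ) ((1 - α)/(4*c)) with hlamdef
  have hlam0 : 0 < lam := lt_min (by norm_num) (div_pos (by linarith) (by linarith))
  have hlam1 : lam < 1 := lt_of_le_of_lt (min_le_left _ _) (by norm_num)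
  have hlamc : 2 * lam * c ≤ (1-α)/2 := by
    have h1 : lam ≤ (1-α)/(4*c) := min_le_right _ _
    have h2 : 2 * ((1-α)/(4*c)) * c = (1-α)/2 := by field_simp; ring
    nlinarith
  refine ⟨lam, hlam0, ρ₀/4, by positivity, ?_⟩
  intro p hp q hq hpρ hqρ hpq
  set B := Metric.closedBall x₀ ρ₀ with hBdef
  have hmemB : ∀ y : E, ‖y - x₀‖ ≤ ρ₀ → y ∈ B := by
    intro y hy; simpa [hBdef, Metric.mem_closedBall, dist_eq_norm] using hy
  have hpB : p ∈ B := hmemB p (by linarith)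
  have hqB : q ∈ B := hmemB q (by linarith)
  have hScompact : IsCompact ((K₁ ∩ B) ×ˢ (K₂ ∩ B)) :=
    ((isCompact_closedBall x₀ ρ₀).inter_left hK₁).prod
      ((isCompact_closedBall x₀ ρ₀).inter_left hK₂)
  have hSne : ((K₁ ∩ B) ×ˢ (K₂ ∩ B)).Nonempty := ⟨(p, q), ⟨hp, hpB⟩, ⟨hq, hqB⟩⟩
  have hgcont : ContinuousOn
      (fun z : E × E => ‖z.1 - z.2‖ + lam * (‖z.1 - p‖ + ‖z.2 - q‖))
      ((K₁ ∩ B) ×ˢ (K₂ ∩ B)) := by fun_prop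
  obtain ⟨z, hzS, hminOn⟩ := hScompact.exists_isMinOn hSne hgcont
  obtain ⟨⟨hz1K, hz1B⟩, hz2K, hz2B⟩ := hzS
  have hmin : ∀ y1 ∈ K₁ ∩ B, ∀ y2 ∈ K₂ ∩ B,
      ‖z.1 - z.2‖ + lam * (‖z.1 - p‖ + ‖z.2 - q‖) ≤
        ‖y1 - y2‖ + lam * (‖y1 - p‖ + ‖y2 - q‖) :=
    fun y1 h1 y2 h2 => hminOn (Set.mk_mem_prod h1 h2)
  have hg0 : ‖z.1 - z.2‖ + lam * (‖z.1 - p‖ + ‖z.2 - q‖) ≤ ‖p - q‖ := by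
    have := hmin p ⟨hp, hpB⟩ q ⟨hq, hqB⟩
    simpa using this
  have hdnn : 0 ≤ ‖z.1 - z.2‖ := norm_nonneg _
  have hn1 : 0 ≤ ‖z.1 - p‖ := norm_nonneg _
  have hn2 : 0 ≤ ‖z.2 - q‖ := norm_nonneg _
  have hloc1 : ‖z.1 - p‖ ≤ ‖p - q‖ / lam := by
    rw [le_div_iff₀ hlam0]; nlinarith
  have hloc2 : ‖z.2 - q‖ ≤ ‖p - q‖ / lam := by
    rw [le_div_iff₀ hlam0]; nlinarith
  have hpqρ : ‖p - q‖ / lam ≤ ρ₀ / 4 := by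
    rw [div_le_iff₀ hlam0]; nlinarith
  have hz1x : ‖z.1 - x₀‖ ≤ ρ₀ / 2 := by
    calc ‖z.1 - x₀‖ ≤ ‖z.1 - p‖ + ‖p - x₀‖ := by
          simpa using norm_add_le (z.1 - p) (p - x₀)
      _ ≤ ρ₀ / 4 + ρ₀ / 4 := by have := hloc1.trans hpqρ; linarith [hpρ.le]
      _ = ρ₀ / 2 := by ring
  have hz2x : ‖z.2 - x₀‖ ≤ ρ₀ / 2 := by
    calc ‖z.2 - x₀‖ ≤ ‖z.2 - q‖ + ‖q - x₀‖ := by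
          simpa using norm_add_le (z.2 - q) (q - x₀)
      _ ≤ ρ₀ / 4 + ρ₀ / 4 := by have := hloc2.trans hpqρ; linarith [hqρ.le]
      _ = ρ₀ / 2 := by ring
  -- Ekeland-type inequality
  have hE : ∀ y1 ∈ K₁ ∩ B, ∀ y2 ∈ K₂ ∩ B,
      ‖z.1 - z.2‖ ≤ ‖y1 - y2‖ + lam * (‖y1 - z.1‖ + ‖y2 - z.2‖) := by
    intro y1 h1 y2 h2
    have h := hmin y1 h1 y2 h2
    have t1 : ‖y1 - p‖ ≤ ‖y1 - z.1‖ + ‖z.1 - p‖ := by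
      simpa using norm_add_le (y1 - z.1) (z.1 - p)
    have t2 : ‖y2 - q‖ ≤ ‖y2 - z.2‖ + ‖z.2 - q‖ := by
      simpa using norm_add_le (y2 - z.2) (z.2 - q)
    nlinarith
  have hdzero : z.1 = z.2 := by
    by_contra hne
    obtain ⟨d, hddef⟩ : ∃ x : ℝ, x = ‖z.1 - z.2‖ := ⟨_, rfl⟩
    have hd : 0 < d := hddef ▸ norm_sub_pos_iff.mpr hne
    have hp2 : z.1 ∉ K₂ := by
      intro hmem
      have h := hE z.1 ⟨hz1K, hz1B⟩ z.1 ⟨hmem, hz1B⟩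
      simp only [sub_self, norm_zero] at h
      rw [← hddef] at h
      nlinarith
    have hq1 : z.2 ∉ K₁ := by
      intro hmem
      have h := hE z.2 ⟨hmem, hz2B⟩ z.2 ⟨hz2K, hz2B⟩
      simp only [sub_self, norm_zero] at h
      rw [norm_sub_rev z.2 z.1, ← hddef] at h
      nlinarith
    have hfr1 : z.1 ∈ frontier K₁ := by
      rw [hK₁.frontier_eq]
      refine ⟨hz1K, fun hint => ?_⟩
      obtain ⟨ε, hε, hball'⟩ := Metric.isOpen_iff.mp isOpen_interior z.1 hint
      obtain ⟨s0, hs0def⟩ : ∃ s : ℝ, s = min (ε/2) (min d (ρ₀/2)) := ⟨_, rfl⟩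
      have hs00 : 0 < s0 := hs0def ▸ lt_min (by positivity) (lt_min hd (by positivity))
      have hs0d : s0 ≤ d := hs0def ▸ le_trans (min_le_right _ _) (min_le_left _ _)
      have hs0ρ : s0 ≤ ρ₀/2 := hs0def ▸ le_trans (min_le_right _ _) (min_le_right _ _)
      have hs0ε : s0 < ε := hs0def ▸ lt_of_le_of_lt (min_le_left _ _) (by linarith)
      obtain ⟨y1, hy1def⟩ : ∃ y : E, y = z.1 + (s0/d) • (z.2 - z.1) := ⟨_, rfl⟩
      have hy1z : ‖y1 - z.1‖ = s0 := by
        rw [hy1def]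
        rw [add_sub_cancel_left, norm_smul, Real.norm_eq_abs,
          abs_of_pos (by positivity), norm_sub_rev, ← hddef]
        field_simp
      have hy1K : y1 ∈ K₁ := interior_subset (hball' (by
        rw [Metric.mem_ball, dist_eq_norm, hy1z]; exact hs0ε))
      have hy1B : y1 ∈ B := hmemB y1 (by
        calc ‖y1 - x₀‖ ≤ ‖y1 - z.1‖ + ‖z.1 - x₀‖ := by
              simpa using norm_add_le (y1 - z.1) (z.1 - x₀)
          _ ≤ s0 + ρ₀/2 := by rw [hy1z]; linarith
          _ ≤ ρ₀ := by linarith)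
      have hy1q : ‖y1 - z.2‖ = d - s0 := by
        have heq : y1 - z.2 = (1 - s0/d) • (z.1 - z.2) := by
          rw [hy1def, sub_smul, one_smul, smul_sub, smul_sub]
          abel
        rw [heq, norm_smul, Real.norm_eq_abs, abs_of_nonneg (by
          rw [sub_nonneg, div_le_one hd]; exact hs0d), ← hddef]
        field_simp
      have h := hE y1 ⟨hy1K, hy1B⟩ z.2 ⟨hz2K, hz2B⟩
      rw [sub_self, norm_zero, hy1q, hy1z, ← hddef] at h
      nlinarith
    have hfr2 : z.2 ∈ frontier K₂ := by
      rw [hK₂.frontier_eq]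
      refine ⟨hz2K, fun hint => ?_⟩
      obtain ⟨ε, hε, hball'⟩ := Metric.isOpen_iff.mp isOpen_interior z.2 hint
      obtain ⟨s0, hs0def⟩ : ∃ s : ℝ, s = min (ε/2) (min d (ρ₀/2)) := ⟨_, rfl⟩
      have hs00 : 0 < s0 := hs0def ▸ lt_min (by positivity) (lt_min hd (by positivity))
      have hs0d : s0 ≤ d := hs0def ▸ le_trans (min_le_right _ _) (min_le_left _ _)
      have hs0ρ : s0 ≤ ρ₀/2 := hs0def ▸ le_trans (min_le_right _ _) (min_le_right _ _)
      have hs0ε : s0 < ε := hs0def ▸ lt_of_le_of_lt (min_le_left _ _) (by linarith)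
      obtain ⟨y2, hy2def⟩ : ∃ y : E, y = z.2 + (s0/d) • (z.1 - z.2) := ⟨_, rfl⟩
      have hy2z : ‖y2 - z.2‖ = s0 := by
        rw [hy2def]
        rw [add_sub_cancel_left, norm_smul, Real.norm_eq_abs,
          abs_of_pos (by positivity), ← hddef]
        field_simp
      have hy2K : y2 ∈ K₂ := interior_subset (hball' (by
        rw [Metric.mem_ball, dist_eq_norm, hy2z]; exact hs0ε))
      have hy2B : y2 ∈ B := hmemB y2 (by
        calc ‖y2 - x₀‖ ≤ ‖y2 - z.2‖ + ‖z.2 - x₀‖ := by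
              simpa using norm_add_le (y2 - z.2) (z.2 - x₀)
          _ ≤ s0 + ρ₀/2 := by rw [hy2z]; linarith
          _ ≤ ρ₀ := by linarith)
      have hy2q : ‖z.1 - y2‖ = d - s0 := by
        have heq : z.1 - y2 = (1 - s0/d) • (z.1 - z.2) := by
          rw [hy2def, sub_smul, one_smul, smul_sub]
          abel
        rw [heq, norm_smul, Real.norm_eq_abs, abs_of_nonneg (by
          rw [sub_nonneg, div_le_one hd]; exact hs0d), ← hddef]
        field_simp
      have h := hE z.1 ⟨hz1K, hz1B⟩ y2 ⟨hy2K, hy2B⟩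
      rw [sub_self, norm_zero, hy2q, hy2z, ← hddef] at h
      nlinarith
    have hz1N : z.1 ∈ N := hball (hmemB z.1 (by linarith))
    have hz2N : z.2 ∈ N := hball (hmemB z.2 (by linarith))
    obtain ⟨v₁, hv₁, v₂, hv₂, hnorm, htr⟩ :=
      H z.1 ⟨⟨hfr1, hp2⟩, hz1N⟩ z.2 ⟨⟨hfr2, hq1⟩, hz2N⟩
    rw [← hddef] at hnorm htr
    have hpn1 : ‖v₁‖ ≤ pairNorm v₁ v₂ := by
      rw [pairNorm]
      have h := Real.sqrt_le_sqrt (show ‖v₁‖^2 ≤ ‖v₁‖^2 + ‖v₂‖^2 by nlinarith [sq_nonneg ‖v₂‖])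
      rwa [Real.sqrt_sq (norm_nonneg _)] at h
    have hpn2 : ‖v₂‖ ≤ pairNorm v₁ v₂ := by
      rw [pairNorm]
      have h := Real.sqrt_le_sqrt
        (show ‖v₂‖^2 ≤ ‖v₁‖^2 + ‖v₂‖^2 by nlinarith [sq_nonneg ‖v₁‖])
      rwa [Real.sqrt_sq (norm_nonneg _)] at h
    have hv1n : ‖v₁‖ ≤ c * d := hpn1.trans hnorm
    have hv2n : ‖v₂‖ ≤ c * d := hpn2.trans hnorm
    -- inner product bound for K₁ direction
    obtain ⟨s1, u1, hs1pos, hs1lim, hu1lim, hmem1⟩ := hv₁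
    have hsu1 : Tendsto (fun j => s1 j * ‖u1 j‖) atTop (𝓝 0) := by
      have h := hs1lim.mul hu1lim.norm; simpa using h
    have hI1 : -(lam * d * ‖v₁‖) ≤ ⟪z.1 - z.2, v₁⟫ := by
      apply inner_bound' _ _ lam d hddef.symm hd s1 u1 hs1pos hu1lim _ hsu1
      have hsmall : ∀ᶠ j in atTop, s1 j * ‖u1 j‖ ≤ ρ₀/2 :=
        hsu1.eventually_le_const (by positivity)
      filter_upwards [hsmall] with j hj
      have hnsu : ‖s1 j • u1 j‖ = s1 j * ‖u1 j‖ := by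
        rw [norm_smul, Real.norm_eq_abs, abs_of_pos (hs1pos j)]
      have hyB : z.1 + s1 j • u1 j ∈ B := hmemB _ (by
        have heq : z.1 + s1 j • u1 j - x₀ = (z.1 - x₀) + s1 j • u1 j := by abel
        rw [heq]
        calc ‖(z.1 - x₀) + s1 j • u1 j‖ ≤ ‖z.1 - x₀‖ + ‖s1 j • u1 j‖ := norm_add_le _ _
          _ ≤ ρ₀/2 + ρ₀/2 := by rw [hnsu]; exact add_le_add hz1x hj
          _ = ρ₀ := by ring)
      have h := hE (z.1 + s1 j • u1 j) ⟨hmem1 j, hyB⟩ z.2 ⟨hz2K, hz2B⟩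
      rw [add_sub_cancel_left, hnsu, sub_self, norm_zero] at h
      have harr : z.1 + s1 j • u1 j - z.2 = (z.1 - z.2) + s1 j • u1 j := by abel
      rw [harr, ← hddef] at h
      linarith
    -- inner product bound for K₂ direction
    obtain ⟨s2, u2, hs2pos, hs2lim, hu2lim, hmem2⟩ := hv₂
    have hsu2 : Tendsto (fun j => s2 j * ‖u2 j‖) atTop (𝓝 0) := by
      have h := hs2lim.mul hu2lim.norm; simpa using h
    have hI2 : -(lam * d * ‖v₂‖) ≤ ⟪z.2 - z.1, v₂⟫ := by
      apply inner_bound' _ _ lam d (by rw [norm_sub_rev]; exact hddef.symm) hd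
        s2 u2 hs2pos hu2lim _ hsu2
      have hsmall : ∀ᶠ j in atTop, s2 j * ‖u2 j‖ ≤ ρ₀/2 :=
        hsu2.eventually_le_const (by positivity)
      filter_upwards [hsmall] with j hj
      have hnsu : ‖s2 j • u2 j‖ = s2 j * ‖u2 j‖ := by
        rw [norm_smul, Real.norm_eq_abs, abs_of_pos (hs2pos j)]
      have hyB : z.2 + s2 j • u2 j ∈ B := hmemB _ (by
        have heq : z.2 + s2 j • u2 j - x₀ = (z.2 - x₀) + s2 j • u2 j := by abel
        rw [heq]
        calc ‖(z.2 - x₀) + s2 j • u2 j‖ ≤ ‖z.2 - x₀‖ + ‖s2 j • u2 j‖ := norm_add_le _ _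
          _ ≤ ρ₀/2 + ρ₀/2 := by rw [hnsu]; exact add_le_add hz2x hj
          _ = ρ₀ := by ring)
      have h := hE z.1 ⟨hz1K, hz1B⟩ (z.2 + s2 j • u2 j) ⟨hmem2 j, hyB⟩
      rw [add_sub_cancel_left, hnsu, sub_self, norm_zero] at h
      have harr : z.1 - (z.2 + s2 j • u2 j) = -((z.2 - z.1) + s2 j • u2 j) := by abel
      rw [harr, norm_neg, ← hddef] at h
      linarith
    -- final contradiction
    have hT : -(d * (α * d)) ≤ ⟪z.1 - z.2, (z.2 - z.1) - (v₁ - v₂)⟫ := by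
      have h1 := abs_real_inner_le_norm (z.1 - z.2) ((z.2 - z.1) - (v₁ - v₂))
      rw [← hddef] at h1
      have h2 : ‖(z.2 - z.1) - (v₁ - v₂)‖ ≤ α * d := htr
      have h3 := neg_abs_le ⟪z.1 - z.2, (z.2 - z.1) - (v₁ - v₂)⟫
      nlinarith [abs_nonneg ⟪z.1 - z.2, (z.2 - z.1) - (v₁ - v₂)⟫]
    have e0 : (z.2 - z.1) - (v₁ - v₂) = -(z.1 - z.2) + (v₂ - v₁) := by abel
    have e1 : ⟪z.1 - z.2, -(z.1 - z.2) + (v₂ - v₁)⟫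
        = ⟪z.1 - z.2, -(z.1 - z.2)⟫ + ⟪z.1 - z.2, v₂ - v₁⟫ := inner_add_right _ _ _
    have e2 : ⟪z.1 - z.2, -(z.1 - z.2)⟫ = -(d^2) := by
      rw [inner_neg_right, real_inner_self_eq_norm_sq, ← hddef]
    have e3 : ⟪z.1 - z.2, v₂ - v₁⟫ = ⟪z.1 - z.2, v₂⟫ - ⟪z.1 - z.2, v₁⟫ :=
      inner_sub_right _ _ _
    have e4 : ⟪z.1 - z.2, v₂⟫ = -⟪z.2 - z.1, v₂⟫ := by
      rw [show z.1 - z.2 = -(z.2 - z.1) from by abel, inner_neg_left]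
    rw [e0, e1, e2, e3, e4] at hT
    have hb1 : -(lam * d * ‖v₁‖) ≥ -(lam * d * (c * d)) := by
      have := mul_le_mul_of_nonneg_left hv1n (by positivity : (0:ℝ) ≤ lam * d)
      linarith
    have hb2 : -(lam * d * ‖v₂‖) ≥ -(lam * d * (c * d)) := by
      have := mul_le_mul_of_nonneg_left hv2n (by positivity : (0:ℝ) ≤ lam * d)
      linarith
    have hfin : -(d*(α*d)) ≤ -(d^2) + lam*d*(c*d) + lam*d*(c*d) := by linarith
    nlinarith [hfin, hd, hα1, mul_pos hd hd, hlamc,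
      mul_le_mul_of_nonneg_right hlamc (mul_pos hd hd).le]
  exact ⟨z.1, ⟨hz1K, hdzero ▸ hz2K⟩, hloc1⟩

/-- Under derivability of `K₁` on `∂K₁ ∩ ∂K₂` and the transversality
condition (◇) at `x₀`, `T^a_{K₁}(x₀) ∩ T^a_{K₂}(x₀) = T^a_{K₁ ∩ K₂}(x₀)`. -/
theorem adjacent_cone_intersection {n : ℕ} (K₁ K₂ : Set (Euc n))
    (hK₁ : IsClosed K₁) (hK₂ : IsClosed K₂)
    (hder : ∀ x ∈ frontier K₁ ∩ frontier K₂, contingentCone K₁ x = adjacentCone K₁ x)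
    (x₀ : Euc n) (hx₀ : x₀ ∈ frontier K₁ ∩ frontier K₂)
    (htrans : TransversalAt K₁ K₂ x₀) :
    adjacentCone K₁ x₀ ∩ adjacentCone K₂ x₀ = adjacentCone (K₁ ∩ K₂) x₀ := by
  have hx₀1 : x₀ ∈ K₁ := hK₁.frontier_subset hx₀.1
  have hx₀2 : x₀ ∈ K₂ := hK₂.frontier_subset hx₀.2
  apply Set.Subset.antisymm
  · rintro v ⟨hv1, hv2⟩
    obtain ⟨lam, hlam, ρ, hρ, key⟩ := key_lemma hK₁ hK₂ htrans
    intro t htpos htlim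
    obtain ⟨w1, hw1lim, hw1mem⟩ := hv1 t htpos htlim
    obtain ⟨w2, hw2lim, hw2mem⟩ := hv2 t htpos htlim
    have hchoice : ∀ i, ∃ r, r ∈ K₁ ∩ K₂ ∧
        (‖t i • w1 i‖ < ρ ∧ ‖t i • w2 i‖ < ρ ∧ ‖t i • w1 i - t i • w2 i‖ ≤ lam * ρ →
          ‖r - (x₀ + t i • w1 i)‖ ≤ ‖t i • w1 i - t i • w2 i‖ / lam) := by
      intro i
      by_cases h : ‖t i • w1 i‖ < ρ ∧ ‖t i • w2 i‖ < ρ ∧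
          ‖t i • w1 i - t i • w2 i‖ ≤ lam * ρ
      · have e1 : ‖(x₀ + t i • w1 i) - x₀‖ < ρ := by
          rw [add_sub_cancel_left]; exact h.1
        have e2 : ‖(x₀ + t i • w2 i) - x₀‖ < ρ := by
          rw [add_sub_cancel_left]; exact h.2.1
        have e3 : ‖(x₀ + t i • w1 i) - (x₀ + t i • w2 i)‖ ≤ lam * ρ := by
          have : (x₀ + t i • w1 i) - (x₀ + t i • w2 i) = t i • w1 i - t i • w2 i := by
            abel
          rw [this]; exact h.2.2
        obtain ⟨r, hr, hb⟩ := key _ (hw1mem i) _ (hw2mem i) e1 e2 e3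
        refine ⟨r, hr, fun _ => ?_⟩
        have : (x₀ + t i • w1 i) - (x₀ + t i • w2 i) = t i • w1 i - t i • w2 i := by
          abel
        rwa [this] at hb
      · exact ⟨x₀, ⟨hx₀1, hx₀2⟩, fun hc => absurd hc h⟩
    choose r hrmem hrbound using hchoice
    refine ⟨fun i => (t i)⁻¹ • (r i - x₀), ?_, ?_⟩
    · rw [tendsto_iff_norm_sub_tendsto_zero]
      have hsw1 : Tendsto (fun i => t i • w1 i) atTop (𝓝 0) := by
        have := htlim.smul hw1lim; simpa using this
      have hsw2 : Tendsto (fun i => t i • w2 i) atTop (𝓝 0) := by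
        have := htlim.smul hw2lim; simpa using this
      have hgap : Tendsto (fun i => ‖w1 i - w2 i‖ / lam + ‖w1 i - v‖) atTop (𝓝 0) := by
        have h1 : Tendsto (fun i => w1 i - w2 i) atTop (𝓝 (v - v)) := hw1lim.sub hw2lim
        rw [sub_self] at h1
        have h2 : Tendsto (fun i => ‖w1 i - w2 i‖ / lam) atTop (𝓝 (‖(0:Euc n)‖ / lam)) :=
          h1.norm.div_const lam
        have h3 : Tendsto (fun i => w1 i - v) atTop (𝓝 (v - v)) := hw1lim.sub tendsto_const_nhds
        rw [sub_self] at h3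
        have h4 := h2.add h3.norm
        simpa using h4
      apply squeeze_zero' (Eventually.of_forall fun i => norm_nonneg _) _ hgap
      have hev1 : ∀ᶠ i in atTop, ‖t i • w1 i‖ < ρ := by
        have h := hsw1.norm; rw [norm_zero] at h; exact h.eventually_lt_const hρ
      have hev2 : ∀ᶠ i in atTop, ‖t i • w2 i‖ < ρ := by
        have h := hsw2.norm; rw [norm_zero] at h; exact h.eventually_lt_const hρ
      have hev3 : ∀ᶠ i in atTop, ‖t i • w1 i - t i • w2 i‖ ≤ lam * ρ := by
        have := (hsw1.sub hsw2).norm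
        rw [sub_self, norm_zero] at this
        exact this.eventually_le_const (by positivity)
      filter_upwards [hev1, hev2, hev3] with i h1 h2 h3
      have hb := hrbound i ⟨h1, h2, h3⟩
      have hti : t i ≠ 0 := (htpos i).ne'
      have hsplit : (t i)⁻¹ • (r i - x₀) - v =
          (t i)⁻¹ • (r i - (x₀ + t i • w1 i)) + (w1 i - v) := by
        rw [smul_sub, smul_sub]
        rw [show (t i)⁻¹ • (x₀ + t i • w1 i) = (t i)⁻¹ • x₀ + w1 i by
          rw [smul_add, inv_smul_smul₀ hti]]
        abel
      rw [hsplit]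
      have hgsm : ‖t i • w1 i - t i • w2 i‖ = t i * ‖w1 i - w2 i‖ := by
        rw [← smul_sub, norm_smul, Real.norm_eq_abs, abs_of_pos (htpos i)]
      calc ‖(t i)⁻¹ • (r i - (x₀ + t i • w1 i)) + (w1 i - v)‖
          ≤ ‖(t i)⁻¹ • (r i - (x₀ + t i • w1 i))‖ + ‖w1 i - v‖ := norm_add_le _ _
        _ ≤ ‖w1 i - w2 i‖ / lam + ‖w1 i - v‖ := by
            apply add_le_add_left
            rw [norm_smul, Real.norm_eq_abs, abs_of_pos (inv_pos.mpr (htpos i))]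
            calc (t i)⁻¹ * ‖r i - (x₀ + t i • w1 i)‖
                ≤ (t i)⁻¹ * (t i * ‖w1 i - w2 i‖ / lam) := by
                  apply mul_le_mul_of_nonneg_left _ (inv_pos.mpr (htpos i)).le
                  rw [← hgsm]; exact hb
              _ = ‖w1 i - w2 i‖ / lam := by field_simp
    · intro i
      have := hrmem i
      rw [smul_inv_smul₀ (htpos i).ne']
      simpa using this
  · intro v hv
    constructor <;> intro t htpos htlim <;>
      obtain ⟨w, hwl, hwm⟩ := hv t htpos htlim
    · exact ⟨w, hwl, fun i => (hwm i).1⟩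
    · exact ⟨w, hwl, fun i => (hwm i).2⟩
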